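/- Let S ≥ 1, D > 0, n ≥ 1, and fix v ∈ [0,D]^S and p ∈ Δ^S. Let p̂ ∈ Δ^S be the average of n i.i.d. multinoulli trials with parameter p. Then there exists (on a possibly enlarged probability space carrying p̂) a random variable q̂ distributed as (1/n)·Binomial(n, pᵀv/D) such that E[ q̂ | p̂ᵀv ] = p̂ᵀv / D; consequently D·q̂ is stochastically optimistic for p̂ᵀv. -/

import Mathlib

open MeasureTheory ProbabilityTheory Finset

noncomputable section

/-- Law of a `Dirichlet(α)` random vector: the law of `(X i / ∑ j, X j) i` where the `X i`
are independent with `X i ~ Gamma (α i) 1`. -/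
def dirichletLaw {S : ℕ} (α : Fin S → ℝ) : Measure (Fin S → ℝ) :=
  (Measure.pi fun i => gammaMeasure (α i) 1).map (fun x i => x i / ∑ j, x j)

/-- The categorical (multinoulli) measure on `Fin S` with parameter `p`. -/
def catMeasure {S : ℕ} (p : Fin S → ℝ) : Measure (Fin S) :=
  ∑ i : Fin S, ENNReal.ofReal (p i) • Measure.dirac i

/-- Joint law of `n` i.i.d. multinoulli trials with parameter `p`. -/
def trialsLaw {S : ℕ} (p : Fin S → ℝ) (n : ℕ) : Measure (Fin n → Fin S) :=
  Measure.pi fun _ : Fin n => catMeasure p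

/-- The empirical distribution (the average `p̂` of the `n` multinoulli trials `x`). -/
def empDist {S n : ℕ} (x : Fin n → Fin S) (i : Fin S) : ℝ :=
  ((Finset.univ.filter fun j => x j = i).card : ℝ) / (n : ℝ)

/-- The law of `(1/n)·Binomial(n, θ)`. -/
def binomAvgLaw (n : ℕ) (θ : ℝ) : Measure ℝ :=
  ∑ k ∈ Finset.range (n + 1),
    ENNReal.ofReal ((n.choose k : ℝ) * θ ^ k * (1 - θ) ^ (n - k)) •
      Measure.dirac ((k : ℝ) / n)

/-- `X` is stochastically optimistic for `Y`: `E[u(X)] ≥ E[u(Y)]` for every convex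
increasing `u : ℝ → ℝ` for which both expectations exist. -/
def StochasticallyOptimistic {Ω : Type*} [MeasurableSpace Ω] (μ : Measure Ω)
    (X Y : Ω → ℝ) : Prop :=
  ∀ u : ℝ → ℝ, ConvexOn ℝ Set.univ u → Monotone u →
    Integrable (fun ω => u (X ω)) μ → Integrable (fun ω => u (Y ω)) μ →
    ∫ ω, u (Y ω) ∂μ ≤ ∫ ω, u (X ω) ∂μ

namespace S19

open scoped ENNReal

variable {Ω : Type*} [Fintype Ω] [MeasurableSpace Ω]

lemma map_sum_smul_dirac {β : Type*} [MeasurableSpace β] (c : Ω → ℝ≥0∞) {f : Ω → β}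
    (hf : Measurable f) :
    (∑ ω : Ω, c ω • Measure.dirac ω).map f = ∑ ω : Ω, c ω • Measure.dirac (f ω) := by
  ext s hs
  rw [Measure.map_apply hf hs, Measure.finset_sum_apply, Measure.finset_sum_apply]
  refine Finset.sum_congr rfl fun ω _ => ?_
  rw [Measure.smul_apply, Measure.smul_apply, Measure.dirac_apply' _ (hf hs),
    Measure.dirac_apply' _ hs]
  congr 1

lemma integral_sum_smul_dirac [MeasurableSingletonClass Ω] (c : Ω → ℝ) (hc : ∀ ω, 0 ≤ c ω)
    (f : Ω → ℝ) :
    ∫ ω, f ω ∂(∑ ω : Ω, ENNReal.ofReal (c ω) • Measure.dirac ω) = ∑ ω : Ω, c ω * f ω := by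
  rw [integral_finset_sum_measure (fun ω _ =>
    ((integrable_const (f ω)).congr (MeasureTheory.ae_eq_dirac f).symm).smul_measure
      ENNReal.ofReal_ne_top)]
  refine Finset.sum_congr rfl fun ω _ => ?_
  rw [integral_smul_measure, integral_dirac, ENNReal.toReal_ofReal (hc ω), smul_eq_mul]

lemma integrable_sum_smul_dirac [MeasurableSingletonClass Ω] (c : Ω → ℝ) (f : Ω → ℝ) :
    Integrable f (∑ ω : Ω, ENNReal.ofReal (c ω) • Measure.dirac ω) := by
  rw [integrable_finset_sum_measure]
  exact fun ω _ =>
    ((integrable_const (f ω)).congr (MeasureTheory.ae_eq_dirac f).symm).smul_measure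
      ENNReal.ofReal_ne_top

instance {S : ℕ} (p : Fin S → ℝ) : IsFiniteMeasure (catMeasure p) := by
  constructor
  rw [catMeasure, Measure.finset_sum_apply]
  exact ENNReal.sum_lt_top.mpr fun i _ => by
    simp [Measure.smul_apply]

lemma catMeasure_apply {S : ℕ} (p : Fin S → ℝ) (s : Set (Fin S)) :
    catMeasure p s = ∑ i : Fin S, ENNReal.ofReal (p i) * s.indicator 1 i := by
  rw [catMeasure, Measure.finset_sum_apply]
  refine Finset.sum_congr rfl fun i _ => ?_
  rw [Measure.smul_apply, Measure.dirac_apply, smul_eq_mul]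

lemma trialsLaw_eq {S : ℕ} (p : Fin S → ℝ) (hp0 : ∀ i, 0 ≤ p i) (n : ℕ) :
    trialsLaw p n = ∑ x : Fin n → Fin S, ENNReal.ofReal (∏ j, p (x j)) • Measure.dirac x := by
  refine Measure.pi_eq fun s hs => ?_
  rw [Measure.finset_sum_apply]
  have h1 : ∀ x : Fin n → Fin S,
      (ENNReal.ofReal (∏ j, p (x j)) • Measure.dirac x) (Set.pi Set.univ s)
        = ∏ j, (ENNReal.ofReal (p (x j)) * (s j).indicator 1 (x j)) := by
    intro x
    rw [Measure.smul_apply, Measure.dirac_apply, smul_eq_mul,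
      ENNReal.ofReal_prod_of_nonneg (fun j _ => hp0 (x j))]
    have h2 : (Set.univ.pi s).indicator (1 : (Fin n → Fin S) → ℝ≥0∞) x
        = ∏ j, (s j).indicator 1 (x j) := by
      by_cases hx : x ∈ Set.pi Set.univ s
      · rw [Set.indicator_of_mem hx]
        rw [Set.mem_univ_pi] at hx
        rw [Finset.prod_congr rfl fun j _ => (Set.indicator_of_mem (hx j) (1 : Fin S → ℝ≥0∞))]
        simp
      · rw [Set.indicator_of_notMem hx]
        rw [Set.mem_univ_pi] at hx
        push_neg at hx
        obtain ⟨j, hj⟩ := hx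
        exact (Finset.prod_eq_zero (Finset.mem_univ j)
          (by simp [Set.indicator_of_notMem hj])).symm
    rw [h2, ← Finset.prod_mul_distrib]
  simp_rw [h1]
  rw [← Fintype.prod_sum fun j (i : Fin S) => ENNReal.ofReal (p i) * (s j).indicator 1 i]
  exact Finset.prod_congr rfl fun j _ => (catMeasure_apply p (s j)).symm

variable {S n : ℕ} (p v : Fin S → ℝ) (D : ℝ)

def w (z : Fin S × Bool) : ℝ := p z.1 * (if z.2 then v z.1 / D else 1 - v z.1 / D)

def Wr (ω : Fin n → Fin S × Bool) : ℝ := ∏ j, w p v D (ω j)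

def cnt {n : ℕ} (b : Fin n → Bool) : ℕ := (univ.filter fun j => b j = true).card

lemma w_nonneg (hp0 : ∀ i, 0 ≤ p i) (hθ0 : ∀ i, 0 ≤ v i / D) (hθ1 : ∀ i, v i / D ≤ 1)
    (z : Fin S × Bool) : 0 ≤ w p v D z := by
  rcases z with ⟨i, b⟩
  cases b
  · exact mul_nonneg (hp0 i) (by simpa using by linarith [hθ1 i])
  · exact mul_nonneg (hp0 i) (by simpa using hθ0 i)

lemma Wr_nonneg (hp0 : ∀ i, 0 ≤ p i) (hθ0 : ∀ i, 0 ≤ v i / D) (hθ1 : ∀ i, v i / D ≤ 1)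
    (ω : Fin n → Fin S × Bool) : 0 ≤ Wr p v D ω :=
  Finset.prod_nonneg fun j _ => w_nonneg p v D hp0 hθ0 hθ1 (ω j)

lemma w_true_add_false (i : Fin S) : w p v D (i, true) + w p v D (i, false) = p i := by
  norm_num [w]
  ring

lemma sum_pair {M : Type*} [AddCommMonoid M] (F : (Fin n → Fin S × Bool) → M) :
    ∑ ω : Fin n → Fin S × Bool, F ω
      = ∑ x : Fin n → Fin S, ∑ b : Fin n → Bool, F (fun j => (x j, b j)) := by
  have h := Fintype.sum_equiv (Equiv.arrowProdEquivProdArrow (Fin n) (fun _ => Fin S) (fun _ => Bool)) F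
    (fun z => F (fun j => (z.1 j, z.2 j))) (fun ω => rfl)
  rw [h, Fintype.sum_prod_type]

lemma sum_b_Wr (x : Fin n → Fin S) :
    ∑ b : Fin n → Bool, Wr p v D (fun j => (x j, b j)) = ∏ j, p (x j) := by
  show ∑ b : Fin n → Bool, ∏ j, w p v D (x j, b j) = _
  rw [← Fintype.prod_sum fun j (c : Bool) => w p v D (x j, c)]
  exact Finset.prod_congr rfl fun j _ => by
    rw [Fintype.sum_bool]; exact w_true_add_false p v D (x j)

lemma sum_i_w (hp1 : ∑ i, p i = 1) (c : Bool) :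
    ∑ i, w p v D (i, c)
      = if c then ∑ i, p i * (v i / D) else 1 - ∑ i, p i * (v i / D) := by
  cases c
  · simp only [w, if_false, Bool.false_eq_true, mul_sub, mul_one, Finset.sum_sub_distrib, hp1]
  · simp only [w, if_true]

lemma sum_x_Wr (hp1 : ∑ i, p i = 1) (b : Fin n → Bool) :
    ∑ x : Fin n → Fin S, Wr p v D (fun j => (x j, b j))
      = (∑ i, p i * (v i / D)) ^ cnt b * (1 - ∑ i, p i * (v i / D)) ^ (n - cnt b) := by
  show ∑ x : Fin n → Fin S, ∏ j, w p v D (x j, b j) = _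
  rw [← Fintype.prod_sum fun j (i : Fin S) => w p v D (i, b j)]
  rw [Finset.prod_congr rfl fun j (_ : j ∈ univ) => sum_i_w p v D hp1 (b j)]
  rw [Finset.prod_ite, Finset.prod_const, Finset.prod_const]
  have hc : (univ.filter fun j => ¬ b j = true).card
      = n - (univ.filter fun j => b j = true).card := by
    have := Finset.card_filter_add_card_filter_not (s := (univ : Finset (Fin n)))
      (p := fun j => b j = true)
    rw [Finset.card_univ, Fintype.card_fin] at this
    omega
  rw [hc]
  rfl

lemma cnt_cast (b : Fin n → Bool) :
    (cnt b : ℝ) = ∑ j, (if b j = true then (1 : ℝ) else 0) := by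
  rw [cnt, Finset.card_filter]
  push_cast
  rfl

lemma sum_b_Wr_cnt (x : Fin n → Fin S) :
    ∑ b : Fin n → Bool, Wr p v D (fun j => (x j, b j)) * (cnt b : ℝ)
      = (∏ j, p (x j)) * ((∑ j, v (x j)) / D) := by
  have key : ∀ j' : Fin n,
      ∑ b : Fin n → Bool, Wr p v D (fun j => (x j, b j)) * (if b j' = true then (1:ℝ) else 0)
        = (p (x j') * (v (x j') / D)) * ∏ j ∈ univ.erase j', p (x j) := by
    intro j'
    have h1 : ∀ b : Fin n → Bool,
        Wr p v D (fun j => (x j, b j)) * (if b j' = true then (1:ℝ) else 0)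
          = ∏ j, (if j = j' then (if b j = true then w p v D (x j, true) else 0)
              else w p v D (x j, b j)) := by
      intro b
      have h2 : ∏ j, (if j = j' then (if b j = true then w p v D (x j, true) else 0)
              else w p v D (x j, b j))
          = (if b j' = true then w p v D (x j', true) else 0)
              * ∏ j ∈ univ.erase j', w p v D (x j, b j) := by
        rw [← Finset.mul_prod_erase univ _ (Finset.mem_univ j'), if_pos rfl]
        congr 1
        exact Finset.prod_congr rfl fun j hj => by rw [if_neg (Finset.mem_erase.mp hj).1]
      rw [h2]
      show (∏ j, w p v D (x j, b j)) * _ = _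
      rw [← Finset.mul_prod_erase univ (fun j => w p v D (x j, b j)) (Finset.mem_univ j')]
      cases hb : b j' <;> simp [hb]
    simp_rw [h1]
    rw [← Fintype.prod_sum fun j (c : Bool) =>
      (if j = j' then (if c = true then w p v D (x j, true) else 0) else w p v D (x j, c))]
    rw [← Finset.mul_prod_erase univ _ (Finset.mem_univ j')]
    congr 1
    · rw [Fintype.sum_bool]
      simp [w]
    · exact Finset.prod_congr rfl fun j hj => by
        rw [Fintype.sum_bool, if_neg (Finset.mem_erase.mp hj).1, if_neg (Finset.mem_erase.mp hj).1]
        exact w_true_add_false p v D (x j)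
  simp_rw [cnt_cast, Finset.mul_sum]
  rw [Finset.sum_comm]
  rw [Finset.sum_congr rfl fun j' (_ : j' ∈ univ) => key j']
  rw [Finset.sum_div, Finset.mul_sum]
  refine Finset.sum_congr rfl fun j' _ => ?_
  rw [← Finset.mul_prod_erase univ (fun j => p (x j)) (Finset.mem_univ j')]
  ring

lemma empDist_dot (x : Fin n → Fin S) :
    ∑ i, empDist x i * v i = (∑ j, v (x j)) / n := by
  simp_rw [empDist, div_mul_eq_mul_div, ← Finset.sum_div]
  congr 1
  have h : ∀ i : Fin S, ((univ.filter fun j => x j = i).card : ℝ) * v i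
      = ∑ j ∈ univ.filter (fun j => x j = i), v (x j) := by
    intro i
    rw [Finset.sum_congr rfl (fun j hj => by rw [(Finset.mem_filter.mp hj).2]),
      Finset.sum_const, nsmul_eq_mul]
  simp_rw [h]
  exact Finset.sum_fiberwise univ x (fun j => v (x j))

lemma card_cnt_eq (n k : ℕ) :
    (univ.filter fun b : Fin n → Bool => cnt b = k).card = n.choose k := by
  have h := Finset.card_powersetCard k (univ : Finset (Fin n))
  rw [Finset.card_univ, Fintype.card_fin] at h
  rw [← h]
  apply Finset.card_bij (fun b _ => univ.filter fun j => b j = true)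
  · intro b hb
    rw [Finset.mem_powersetCard]
    exact ⟨Finset.subset_univ _, (Finset.mem_filter.mp hb).2⟩
  · intro b₁ h₁ b₂ h₂ he
    funext j
    have := Finset.ext_iff.mp he j
    simp only [Finset.mem_filter, Finset.mem_univ, true_and] at this
    cases hb : b₁ j
    · cases hb2 : b₂ j
      · rfl
      · exact absurd (this.mpr hb2) (by simp [hb])
    · exact (this.mp hb).symm
  · intro t ht
    rw [Finset.mem_powersetCard] at ht
    refine ⟨fun j => decide (j ∈ t), ?_, ?_⟩
    · rw [Finset.mem_filter]
      refine ⟨Finset.mem_univ _, ?_⟩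
      rw [cnt, ← ht.2]
      congr 1
      ext j
      simp
    · ext j
      simp

lemma sum_b_Wr_qhat (x : Fin n → Fin S) :
    ∑ b : Fin n → Bool, Wr p v D (fun j => (x j, b j)) * ((cnt b : ℝ) / n)
      = (∏ j, p (x j)) * ((∑ i, empDist x i * v i) / D) := by
  simp_rw [mul_div_assoc']
  rw [← Finset.sum_div, sum_b_Wr_cnt, empDist_dot]
  ring


lemma jensen_core (hp0 : ∀ i, 0 ≤ p i) (hθ0 : ∀ i, 0 ≤ v i / D) (hθ1 : ∀ i, v i / D ≤ 1)
    (hD0 : D ≠ 0) (hn0 : (n : ℝ) ≠ 0) {u : ℝ → ℝ} (hu : ConvexOn ℝ Set.univ u)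
    (x : Fin n → Fin S) :
    ∑ b : Fin n → Bool, Wr p v D (fun j => (x j, b j)) * u (∑ i, empDist x i * v i)
      ≤ ∑ b : Fin n → Bool, Wr p v D (fun j => (x j, b j)) * u (D * ((cnt b : ℝ) / n)) := by
  have hP0 : 0 ≤ ∏ j, p (x j) := Finset.prod_nonneg fun j _ => hp0 _
  rcases eq_or_lt_of_le hP0 with hP | hP
  · have hz : ∀ b : Fin n → Bool, Wr p v D (fun j => (x j, b j)) = 0 := by
      obtain ⟨j0, _, hj0⟩ := Finset.prod_eq_zero_iff.mp hP.symm
      intro b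
      exact Finset.prod_eq_zero (Finset.mem_univ j0) (by simp [w, hj0])
    simp [hz]
  · have hWb : ∀ b : Fin n → Bool, 0 ≤ Wr p v D (fun j => (x j, b j)) :=
      fun b => Wr_nonneg p v D hp0 hθ0 hθ1 _
    have hsum1 : ∑ b : Fin n → Bool, Wr p v D (fun j => (x j, b j)) / (∏ j, p (x j)) = 1 := by
      rw [← Finset.sum_div, sum_b_Wr, div_self hP.ne']
    have hjen := hu.map_sum_le (t := (univ : Finset (Fin n → Bool)))
      (w := fun b => Wr p v D (fun j => (x j, b j)) / (∏ j, p (x j)))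
      (p := fun b => D * ((cnt b : ℝ) / n))
      (fun b _ => div_nonneg (hWb b) hP0) hsum1 (fun b _ => Set.mem_univ _)
    have hmean : ∑ b : Fin n → Bool,
        (Wr p v D (fun j => (x j, b j)) / (∏ j, p (x j))) • (D * ((cnt b : ℝ) / n))
          = ∑ i, empDist x i * v i := by
      have hre : ∀ b : Fin n → Bool,
          (Wr p v D (fun j => (x j, b j)) / (∏ j, p (x j))) • (D * ((cnt b : ℝ) / n))
            = (Wr p v D (fun j => (x j, b j)) * (cnt b : ℝ)) * (D / ((∏ j, p (x j)) * n)) := by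
        intro b
        rw [smul_eq_mul]
        ring
      rw [Finset.sum_congr rfl fun b _ => hre b, ← Finset.sum_mul, sum_b_Wr_cnt, empDist_dot]
      field_simp
    rw [hmean] at hjen
    calc ∑ b : Fin n → Bool, Wr p v D (fun j => (x j, b j)) * u (∑ i, empDist x i * v i)
        = (∏ j, p (x j)) * u (∑ i, empDist x i * v i) := by
          rw [← Finset.sum_mul, sum_b_Wr]
      _ ≤ (∏ j, p (x j)) * ∑ b : Fin n → Bool,
            (Wr p v D (fun j => (x j, b j)) / (∏ j, p (x j))) • u (D * ((cnt b : ℝ) / n)) :=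
          mul_le_mul_of_nonneg_left hjen hP0
      _ = ∑ b : Fin n → Bool, Wr p v D (fun j => (x j, b j)) * u (D * ((cnt b : ℝ) / n)) := by
          rw [Finset.mul_sum]
          refine Finset.sum_congr rfl fun b _ => ?_
          rw [smul_eq_mul]
          field_simp

end S19

/-- The Binomial–Multinomial coupling (Lemma `BB` and its corollary in the paper):
on an enlarged probability space carrying the multinoulli trials, there is a
`(1/n)·Binomial(n, pᵀv/D)` random variable `q̂` with `E[q̂ | p̂ᵀv] = p̂ᵀv / D`, and
consequently `D·q̂` is stochastically optimistic for `p̂ᵀv`. -/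
theorem stmt_19 (S n : ℕ) (hS : 1 ≤ S) (hn : 1 ≤ n) (D : ℝ) (hD : 0 < D)
    (v : Fin S → ℝ) (hv : ∀ i, v i ∈ Set.Icc (0 : ℝ) D)
    (p : Fin S → ℝ) (hp : p ∈ stdSimplex ℝ (Fin S)) :
    ∃ (Ω' : Type) (_mΩ' : MeasurableSpace Ω') (μ' : Measure Ω'),
      IsProbabilityMeasure μ' ∧
      ∃ (pr : Ω' → (Fin n → Fin S)) (qhat : Ω' → ℝ),
        Measurable pr ∧ Measurable qhat ∧
        μ'.map pr = trialsLaw p n ∧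
        μ'.map qhat = binomAvgLaw n ((∑ i, p i * v i) / D) ∧
        (μ'[qhat |
            MeasurableSpace.comap (fun ω' => ∑ i, empDist (pr ω') i * v i)
              Real.measurableSpace]
          =ᵐ[μ'] fun ω' => (∑ i, empDist (pr ω') i * v i) / D) ∧
        StochasticallyOptimistic μ' (fun ω' => D * qhat ω')
          (fun ω' => ∑ i, empDist (pr ω') i * v i) := by
  classical
  have hp0 : ∀ i, 0 ≤ p i := hp.1
  have hp1 : ∑ i, p i = 1 := hp.2
  have hθ0 : ∀ i, 0 ≤ v i / D := fun i => div_nonneg (hv i).1 hD.le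
  have hθ1 : ∀ i, v i / D ≤ 1 := fun i => (div_le_one hD).mpr (hv i).2
  have hn0 : (n : ℝ) ≠ 0 := Nat.cast_ne_zero.mpr (by omega)
  have hWr0 : ∀ ω : Fin n → Fin S × Bool, 0 ≤ S19.Wr p v D ω :=
    S19.Wr_nonneg p v D hp0 hθ0 hθ1
  have hprob : IsProbabilityMeasure
      (∑ ω : Fin n → Fin S × Bool, ENNReal.ofReal (S19.Wr p v D ω) • Measure.dirac ω) := by
    constructor
    rw [Measure.finset_sum_apply]
    have h1 : ∀ ω : Fin n → Fin S × Bool,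
        (ENNReal.ofReal (S19.Wr p v D ω) • Measure.dirac ω) Set.univ
          = ENNReal.ofReal (S19.Wr p v D ω) := by
      intro ω
      rw [Measure.smul_apply, measure_univ, smul_eq_mul, mul_one]
    rw [Finset.sum_congr rfl fun ω _ => h1 ω,
      ← ENNReal.ofReal_sum_of_nonneg (fun ω _ => hWr0 ω),
      S19.sum_pair (S19.Wr p v D),
      Finset.sum_congr rfl fun x (_ : x ∈ univ) => S19.sum_b_Wr p v D x,
      ← Fintype.prod_sum fun (j : Fin n) (i : Fin S) => p i]
    simp [hp1]
  refine ⟨Fin n → Fin S × Bool, inferInstance,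
    ∑ ω : Fin n → Fin S × Bool, ENNReal.ofReal (S19.Wr p v D ω) • Measure.dirac ω,
    hprob, fun ω j => (ω j).1,
    fun ω => ((Finset.univ.filter fun j => (ω j).2 = true).card : ℝ) / n,
    Measurable.of_discrete, Measurable.of_discrete, ?_, ?_, ?_, ?_⟩
  · -- map pr
    rw [S19.map_sum_smul_dirac _ Measurable.of_discrete, S19.trialsLaw_eq p hp0 n,
      S19.sum_pair]
    show (∑ x : Fin n → Fin S, ∑ b : Fin n → Bool,
        ENNReal.ofReal (S19.Wr p v D fun j => (x j, b j)) • Measure.dirac x)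
      = ∑ x : Fin n → Fin S, ENNReal.ofReal (∏ j, p (x j)) • Measure.dirac x
    refine Finset.sum_congr rfl fun x _ => ?_
    rw [← Finset.sum_smul, ← ENNReal.ofReal_sum_of_nonneg (fun b _ => hWr0 _),
      S19.sum_b_Wr]
  · -- map qhat
    rw [S19.map_sum_smul_dirac _ Measurable.of_discrete, S19.sum_pair]
    show (∑ x : Fin n → Fin S, ∑ b : Fin n → Bool,
        ENNReal.ofReal (S19.Wr p v D fun j => (x j, b j))
          • Measure.dirac ((S19.cnt b : ℝ) / n))
      = binomAvgLaw n ((∑ i, p i * v i) / D)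
    rw [Finset.sum_comm]
    have hθeq : (∑ i, p i * v i) / D = ∑ i, p i * (v i / D) := by
      rw [Finset.sum_div]
      exact Finset.sum_congr rfl fun i _ => (mul_div_assoc _ _ _)
    rw [binomAvgLaw, hθeq]
    have hcnt_le : ∀ b : Fin n → Bool, S19.cnt b ≤ n := fun b =>
      le_trans (Finset.card_filter_le _ _) (by simp)
    calc ∑ b : Fin n → Bool, ∑ x : Fin n → Fin S,
          ENNReal.ofReal (S19.Wr p v D fun j => (x j, b j))
            • Measure.dirac ((S19.cnt b : ℝ) / n)
        = ∑ b : Fin n → Bool,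
            ENNReal.ofReal ((∑ i, p i * (v i / D)) ^ S19.cnt b
              * (1 - ∑ i, p i * (v i / D)) ^ (n - S19.cnt b))
              • Measure.dirac ((S19.cnt b : ℝ) / n) :=
          Finset.sum_congr rfl fun b _ => by
            rw [← Finset.sum_smul, ← ENNReal.ofReal_sum_of_nonneg (fun x _ => hWr0 _),
              S19.sum_x_Wr p v D hp1 b]
      _ = ∑ k ∈ Finset.range (n + 1), ∑ b ∈ univ.filter (fun b : Fin n → Bool => S19.cnt b = k),
            ENNReal.ofReal ((∑ i, p i * (v i / D)) ^ S19.cnt b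
              * (1 - ∑ i, p i * (v i / D)) ^ (n - S19.cnt b))
              • Measure.dirac ((S19.cnt b : ℝ) / n) :=
          (Finset.sum_fiberwise_of_maps_to
            (fun b _ => Finset.mem_range.mpr (Nat.lt_succ_of_le (hcnt_le b))) _).symm
      _ = ∑ k ∈ Finset.range (n + 1),
            ENNReal.ofReal ((n.choose k : ℝ) * (∑ i, p i * (v i / D)) ^ k
              * (1 - ∑ i, p i * (v i / D)) ^ (n - k)) • Measure.dirac ((k : ℝ) / n) := by
          refine Finset.sum_congr rfl fun k hk => ?_
          rw [Finset.sum_congr rfl (fun b hb => by rw [(Finset.mem_filter.mp hb).2]),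
            Finset.sum_const, S19.card_cnt_eq, ← Nat.cast_smul_eq_nsmul ENNReal, smul_smul]
          congr 1
          rw [← ENNReal.ofReal_natCast, ← ENNReal.ofReal_mul (Nat.cast_nonneg _), ← mul_assoc]
  · -- conditional expectation
    haveI := hprob
    have hgm : AEStronglyMeasurable[
        (MeasurableSpace.comap (fun ω' : Fin n → Fin S × Bool =>
            ∑ i, empDist (fun j => (ω' j).1) i * v i) Real.measurableSpace)]
        (fun ω' : Fin n → Fin S × Bool => (∑ i, empDist (fun j => (ω' j).1) i * v i) / D)
        (∑ ω : Fin n → Fin S × Bool, ENNReal.ofReal (S19.Wr p v D ω) • Measure.dirac ω) := by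
      refine ⟨fun ω' => (∑ i, empDist (fun j => (ω' j).1) i * v i) / D, ?_, ae_eq_refl _⟩
      have hm1 : @Measurable _ _ (MeasurableSpace.comap (fun ω' : Fin n → Fin S × Bool =>
          ∑ i, empDist (fun j => (ω' j).1) i * v i) Real.measurableSpace) _
          (fun ω' : Fin n → Fin S × Bool => ∑ i, empDist (fun j => (ω' j).1) i * v i) :=
        fun s hs => ⟨s, hs, rfl⟩
      exact Measurable.stronglyMeasurable (hm1.div_const D)
    refine (MeasureTheory.ae_eq_condExp_of_forall_setIntegral_eq
      (fun s _ => MeasurableSet.of_discrete)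
      (S19.integrable_sum_smul_dirac _ _)
      (fun s _ _ => (S19.integrable_sum_smul_dirac _ _).integrableOn)
      ?_ hgm).symm
    rintro s ⟨A, hA, rfl⟩ -
    rw [← MeasureTheory.integral_indicator MeasurableSet.of_discrete,
      ← MeasureTheory.integral_indicator MeasurableSet.of_discrete,
      S19.integral_sum_smul_dirac _ hWr0, S19.integral_sum_smul_dirac _ hWr0,
      S19.sum_pair, S19.sum_pair]
    refine Finset.sum_congr rfl fun x _ => ?_
    by_cases hmem : (∑ i, empDist x i * v i) ∈ A
    · have hmem' : ∀ b : Fin n → Bool, (fun j => (x j, b j)) ∈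
          ((fun ω' : Fin n → Fin S × Bool =>
            ∑ i, empDist (fun j => (ω' j).1) i * v i) ⁻¹' A) := fun b => hmem
      calc ∑ b : Fin n → Bool, S19.Wr p v D (fun j => (x j, b j)) *
            ((fun ω' : Fin n → Fin S × Bool =>
                ∑ i, empDist (fun j => (ω' j).1) i * v i) ⁻¹' A).indicator
              (fun ω' => (∑ i, empDist (fun j => (ω' j).1) i * v i) / D) (fun j => (x j, b j))
          = ∑ b : Fin n → Bool, S19.Wr p v D (fun j => (x j, b j)) *
              ((∑ i, empDist x i * v i) / D) :=
            Finset.sum_congr rfl fun b _ =>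
              congrArg (fun r => S19.Wr p v D (fun j => (x j, b j)) * r)
                (Set.indicator_of_mem (hmem' b) _)
        _ = ∑ b : Fin n → Bool, S19.Wr p v D (fun j => (x j, b j)) * ((S19.cnt b : ℝ) / n) := by
            rw [← Finset.sum_mul, S19.sum_b_Wr, S19.sum_b_Wr_qhat]
        _ = ∑ b : Fin n → Bool, S19.Wr p v D (fun j => (x j, b j)) *
            ((fun ω' : Fin n → Fin S × Bool =>
                ∑ i, empDist (fun j => (ω' j).1) i * v i) ⁻¹' A).indicator
              (fun ω' => ((Finset.univ.filter fun j => (ω' j).2 = true).card : ℝ) / n)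
              (fun j => (x j, b j)) :=
            (Finset.sum_congr rfl fun b _ =>
              congrArg (fun r => S19.Wr p v D (fun j => (x j, b j)) * r)
                (Set.indicator_of_mem (hmem' b) _)).symm
    · have hmem' : ∀ b : Fin n → Bool, (fun j => (x j, b j)) ∉
          ((fun ω' : Fin n → Fin S × Bool =>
            ∑ i, empDist (fun j => (ω' j).1) i * v i) ⁻¹' A) := fun b => hmem
      calc ∑ b : Fin n → Bool, S19.Wr p v D (fun j => (x j, b j)) *
            ((fun ω' : Fin n → Fin S × Bool =>
                ∑ i, empDist (fun j => (ω' j).1) i * v i) ⁻¹' A).indicator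
              (fun ω' => (∑ i, empDist (fun j => (ω' j).1) i * v i) / D) (fun j => (x j, b j))
          = ∑ b : Fin n → Bool, S19.Wr p v D (fun j => (x j, b j)) * 0 :=
            Finset.sum_congr rfl fun b _ =>
              congrArg (fun r => S19.Wr p v D (fun j => (x j, b j)) * r)
                (Set.indicator_of_notMem (hmem' b) _)
        _ = ∑ b : Fin n → Bool, S19.Wr p v D (fun j => (x j, b j)) *
            ((fun ω' : Fin n → Fin S × Bool =>
                ∑ i, empDist (fun j => (ω' j).1) i * v i) ⁻¹' A).indicator
              (fun ω' => ((Finset.univ.filter fun j => (ω' j).2 = true).card : ℝ) / n)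
              (fun j => (x j, b j)) :=
            (Finset.sum_congr rfl fun b _ =>
              congrArg (fun r => S19.Wr p v D (fun j => (x j, b j)) * r)
                (Set.indicator_of_notMem (hmem' b) _)).symm
  · -- stochastic optimism
    intro u hu hmono hint1 hint2
    rw [S19.integral_sum_smul_dirac _ hWr0, S19.integral_sum_smul_dirac _ hWr0,
      S19.sum_pair, S19.sum_pair]
    show (∑ x : Fin n → Fin S, ∑ b : Fin n → Bool,
        S19.Wr p v D (fun j => (x j, b j)) * u (∑ i, empDist x i * v i))
      ≤ ∑ x : Fin n → Fin S, ∑ b : Fin n → Bool,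
        S19.Wr p v D (fun j => (x j, b j)) * u (D * ((S19.cnt b : ℝ) / n))
    exact Finset.sum_le_sum fun x _ =>
      S19.jensen_core p v D hp0 hθ0 hθ1 hD.ne' hn0 hu x

end
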